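/- Fix integers 1 ≤ α ≤ i ≤ n−1. For r_1,…,r_α ∈ K define n×n matrices M_1,…,M_α recursively by M_1(r_1) := x_{i−α+1}(r_1) and, for 2 ≤ j ≤ α, M_j(r_1,…,r_j) := M_{j−1}(r_1,…,r_{j−1})·x_{i−α+j}(r_j)·M_{j−1}(r_1,…,r_{j−2},−r_{j−1})·x_{i−α+j}(−r_j). Then M_α(r_1,…,r_α) = I + (r_1·r_2⋯r_α)·E_{i−α+1, i+1}, where E_{ab} denotes the n×n matrix with entry 1 in position (a,b) and 0 elsewhere. -/

import Mathlib

open Matrix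

noncomputable section

variable {K : Type*} [Field K]

/-- `x_i(z)`: identity except entry `z` in (1-based) position `(i, i+1)`. -/
def xMat (n i : ℕ) (z : K) : Matrix (Fin n) (Fin n) K :=
  Matrix.of fun a b => if (a : ℕ) = (b : ℕ) then 1
    else if (a : ℕ) + 1 = i ∧ (b : ℕ) = i then z else 0

/-- The recursively defined matrices `M_j(r_1,…,r_j)` (for fixed `i`, `α`). -/
def Mrec (n i α : ℕ) : ℕ → (ℕ → K) → Matrix (Fin n) (Fin n) K
  | 0, _ => 1
  | 1, r => xMat n (i - α + 1) (r 1)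
  | (j + 2), r =>
      Mrec n i α (j + 1) r * xMat n (i - α + (j + 2)) (r (j + 2)) *
        Mrec n i α (j + 1) (Function.update r (j + 1) (-(r (j + 1)))) *
        xMat n (i - α + (j + 2)) (-(r (j + 2)))

lemma xMat_eq' {n k : ℕ} (a b : Fin n) (ha : (a : ℕ) + 1 = k) (hb : (b : ℕ) = k) (z : K) :
    xMat n k z = 1 + Matrix.single a b z := by
  ext c d
  have h1 : (a = c ∧ b = d) ↔ ((c : ℕ) + 1 = k ∧ (d : ℕ) = k) := by
    simp only [Fin.ext_iff]; omega
  have h2 : (c = d) ↔ ((c : ℕ) = (d : ℕ)) := Fin.ext_iff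
  simp only [xMat, Matrix.of_apply, Matrix.add_apply, Matrix.one_apply,
    Matrix.single, Matrix.of_apply, h1, h2]
  split_ifs with g1 g2 g3 <;> first | (exfalso; omega) | simp

lemma comm_lemma {n : ℕ} (a b c : Fin n) (hab : a ≠ b) (hbc : b ≠ c) (hac : a ≠ c) (x z : K) :
    (1 + Matrix.single a b x) * (1 + Matrix.single b c z) *
      (1 + Matrix.single a b (-x)) * (1 + Matrix.single b c (-z)) =
    1 + Matrix.single a c (x * z) := by
  have e1 : Matrix.single a b (-x) = -(Matrix.single a b x) := by
    ext; simp [Matrix.single]; split <;> simp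
  have e2 : Matrix.single b c (-z) = -(Matrix.single b c z) := by
    ext; simp [Matrix.single]; split <;> simp
  simp only [mul_add, add_mul, one_mul, mul_one, e1, e2, mul_neg, neg_mul, neg_neg,
    Matrix.single_mul_single_same,
    Matrix.single_mul_single_of_ne _ _ _ _ hab.symm,
    Matrix.single_mul_single_of_ne _ _ _ _ hbc.symm,
    Matrix.single_mul_single_of_ne _ _ _ _ hac.symm,
    Matrix.single_mul_single_of_ne _ _ _ _ hbc,
    Matrix.single_mul_single_of_ne _ _ _ _ hab,
    Matrix.single_mul_single_of_ne _ _ _ _ hac,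
    zero_mul, mul_zero, add_zero, zero_add, neg_zero]
  abel

lemma key_lemma (n i α : ℕ) (hn : 2 ≤ n) (hα : 1 ≤ α) (hαi : α ≤ i) (hin : i ≤ n - 1) :
    ∀ j, ∀ r : ℕ → K, 1 ≤ j → j ≤ α → ∀ (a b : Fin n),
      (a : ℕ) = i - α → (b : ℕ) = i - α + j →
      Mrec n i α j r = 1 + Matrix.single a b (∏ s ∈ Finset.Icc 1 j, r s) := by
  intro j
  induction j using Nat.strong_induction_on with
  | _ j IH =>
    intro r h1 h2 a b ha hb
    match j, h1, h2, hb with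
    | 1, _, _, hb =>
      rw [show (∏ s ∈ Finset.Icc 1 1, r s) = r 1 by simp]
      exact xMat_eq' a b (by omega) (by omega) (r 1)
    | (j + 2), _, h2, hb =>
      have hmlt : i - α + (j + 1) < n := by omega
      set m : Fin n := ⟨i - α + (j + 1), hmlt⟩ with hm
      have hmv : (m : ℕ) = i - α + (j + 1) := rfl
      have ihA := IH (j + 1) (by omega) r (by omega) (by omega) a m ha hmv
      have ihB := IH (j + 1) (by omega) (Function.update r (j + 1) (-(r (j + 1))))
        (by omega) (by omega) a m ha hmv
      have hX := xMat_eq' (k := i - α + (j + 2)) m b (by rw [hmv]; omega) hb (r (j + 2))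
      have hX' := xMat_eq' (k := i - α + (j + 2)) m b (by rw [hmv]; omega) hb (-(r (j + 2)))
      have hupd : (∏ s ∈ Finset.Icc 1 (j + 1), Function.update r (j + 1) (-(r (j + 1))) s)
          = -(∏ s ∈ Finset.Icc 1 (j + 1), r s) := by
        rw [Finset.prod_Icc_succ_top (by omega), Finset.prod_Icc_succ_top (by omega)]
        rw [Function.update_self]
        rw [Finset.prod_congr rfl fun s hs => by
          rw [Function.update_of_ne (by simp at hs; omega)]]
        ring
      rw [show Mrec n i α (j + 2) r =
        Mrec n i α (j + 1) r * xMat n (i - α + (j + 2)) (r (j + 2)) *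
          Mrec n i α (j + 1) (Function.update r (j + 1) (-(r (j + 1)))) *
          xMat n (i - α + (j + 2)) (-(r (j + 2))) from rfl]
      rw [ihA, ihB, hX, hX', hupd]
      rw [comm_lemma a m b (by simp [Fin.ext_iff, ha, hmv]; try omega)
        (by simp [Fin.ext_iff, hmv, hb]; try omega) (by simp [Fin.ext_iff, ha, hb]; try omega)]
      rw [Finset.prod_Icc_succ_top (show 1 ≤ j + 1 + 1 by omega)]

theorem stmt17 (n i α : ℕ) (hn : 2 ≤ n) (hα : 1 ≤ α) (hαi : α ≤ i) (hin : i ≤ n - 1)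
    (r : ℕ → K) :
    Mrec n i α α r =
      1 + Matrix.single (⟨i - α, by omega⟩ : Fin n) (⟨i, by omega⟩ : Fin n)
        (∏ s ∈ Finset.Icc 1 α, r s) := by
  exact key_lemma n i α hn hα hαi hin α r hα le_rfl _ _ rfl (by simp; omega)
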